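/- If M is a submanifold of a locally metallic Riemannian manifold, then ∇_X ξ_α = −P(A_α X) + Σ_β a_{αβ} A_β X + Σ_β l_{αβ}(X) ξ_β for all tangent X. -/

import Mathlib

/-- On a submanifold of a locally metallic Riemannian manifold (`∇̄J = 0`),
`∇_X ξ_α = −P(A_α X) + Σ_β a_{αβ} A_β X + Σ_β l_{αβ}(X) ξ_β`. -/
theorem induced_xi_derivative
    {R : Type*} [CommRing R] [Algebra ℝ R]
    {T W : Type*} [AddCommGroup T] [Module R T] [AddCommGroup W] [Module R W]
    (p q : ℝ) (hp : 0 < p) (hq : 0 < q)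
    -- the immersion of tangent fields into ambient fields along M, and the tangential projection
    (ι : T →ₗ[R] W) (π : W →ₗ[R] T) (hπι : ∀ x, π (ι x) = x)
    -- the ambient metric, the metallic structure J and its compatibility with the metric
    (gbar : W →ₗ[R] W →ₗ[R] R) (hgsym : ∀ v w, gbar v w = gbar w v)
    (J : W →ₗ[R] W)
    (hJ2 : ∀ v, J (J v) = algebraMap ℝ R p • J v + algebraMap ℝ R q • v)
    (hJcompat : ∀ v w, gbar (J v) w = gbar v (J w))
    -- an orthonormal normal frame
    (r : ℕ) (N : Fin r → W)
    (hON : ∀ α β, gbar (N α) (N β) = if α = β then 1 else 0)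
    (hNperp : ∀ α x, gbar (N α) (ι x) = 0)
    (hπN : ∀ α, π (N α) = 0)
    -- vector fields act on functions as derivations; ambient and induced connections
    (D : T → Derivation ℝ R R)
    (nabbar : T → W → W) (nab : T → T → T)
    (hadd : ∀ X v w, nabbar X (v + w) = nabbar X v + nabbar X w)
    (hLeib : ∀ X (f : R) v, nabbar X (f • v) = D X f • v + f • nabbar X v)
    -- J is parallel: the ambient manifold is locally metallic
    (hJpar : ∀ X v, nabbar X (J v) = J (nabbar X v))
    -- Gauss and Weingarten formulas
    (h : Fin r → T → T → R) (A : Fin r → T → T) (l : Fin r → Fin r → T → R)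
    (hGauss : ∀ X Y, nabbar X (ι Y) = ι (nab X Y) + ∑ α, h α X Y • N α)
    (hWein : ∀ X α, nabbar X (N α) = - ι (A α X) + ∑ β, l α β X • N β)
    -- the induced Σ-structure
    (P : T → T) (u : Fin r → T → R) (ξ : Fin r → T) (a : Fin r → Fin r → R)
    (hdecT : ∀ X, J (ι X) = ι (P X) + ∑ α, u α X • N α)
    (hdecN : ∀ α, J (N α) = ι (ξ α) + ∑ β, a α β • N β) :
    ∀ X α, nab X (ξ α) = - P (A α X) + ∑ β, a α β • A β X + ∑ β, l α β X • ξ β := by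
  intro X α
  have hsum : ∀ (s : Finset (Fin r)) (f : Fin r → W),
      nabbar X (∑ i ∈ s, f i) = ∑ i ∈ s, nabbar X (f i) := by
    intro s f
    induction s using Finset.induction_on with
    | empty =>
      simp only [Finset.sum_empty]
      have h0 := hadd X 0 0
      rw [add_zero] at h0
      exact left_eq_add.mp h0
    | insert _ _ hni ih =>
      rw [Finset.sum_insert hni, hadd, ih, Finset.sum_insert hni]
  -- expand both sides of hJpar X (N α)
  have key : nabbar X (J (N α)) = J (nabbar X (N α)) := hJpar X (N α)
  rw [hdecN, hWein, hadd, hsum, hGauss] at key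
  have lhs : π (ι (nab X (ξ α)) + ∑ β, h β X (ξ α) • N β
      + ∑ β, nabbar X (a α β • N β)) = nab X (ξ α) - ∑ β, a α β • A β X := by
    have : ∀ β, π (nabbar X (a α β • N β)) = - (a α β • A β X) := by
      intro β
      rw [hLeib, hWein]
      simp [hπN, hπι, smul_add, Finset.smul_sum, smul_smul]
    simp [hπN, hπι, this, Finset.sum_neg_distrib, sub_eq_add_neg]
  have rhs : π (J (- ι (A α X) + ∑ β, l α β X • N β))
      = - P (A α X) + ∑ β, l α β X • ξ β := by
    rw [map_add, map_neg, hdecT, map_sum]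
    have : ∀ β, π (J (N β)) = ξ β := by
      intro β
      rw [hdecN]
      simp [hπN, hπι, smul_add, Finset.smul_sum, smul_smul]
    simp [this, hπN, hπι]
  have := congrArg π key
  rw [lhs, rhs] at this
  rw [sub_eq_iff_eq_add] at this
  rw [this]; abel
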